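/- With q_f = (1/(2β))[α − C̄ − (1 + κ)(C_f − C̄)] and r_f = (κ/β)(C_f − C̄) for f = 1,...,n, the total social welfare Σ_f [∫₀^{q_f + r_f}(α − βw)dw − C_f q_f] equals (3n/(8β))·[(α − C̄)² + σ_C² + (1/3)κ(6 − κ)σ_C²], where σ_C² = (1/n)Σ_f (C_f − C̄)² and C̄ = (1/n)Σ_f C_f. Consequently this welfare is maximized over κ ∈ ℝ at κ = 3. -/

import Mathlib

/-- Closed-form social welfare at the networked Cournot equilibrium:
`Σ_f [∫₀^{q_f+r_f}(α − βw)dw − C_f q_f] = (3n/(8β))[(α−C̄)² + σ_C² + (1/3)κ(6−κ)σ_C²]`,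
and this welfare is maximized over `κ ∈ ℝ` at `κ = 3`. -/
theorem stmt14 {n : ℕ} (hn : 1 ≤ n) (α β : ℝ) (hβ : 0 < β) (C : Fin n → ℝ) :
    let Cbar : ℝ := (1 / (n : ℝ)) * ∑ g, C g
    let σsq : ℝ := (1 / (n : ℝ)) * ∑ g, (C g - Cbar) ^ 2
    let q : ℝ → Fin n → ℝ :=
      fun κ f => (1 / (2 * β)) * (α - Cbar - (1 + κ) * (C f - Cbar))
    let r : ℝ → Fin n → ℝ := fun κ f => (κ / β) * (C f - Cbar)
    let W : ℝ → ℝ :=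
      fun κ => 3 * (n : ℝ) / (8 * β) *
        ((α - Cbar) ^ 2 + σsq + (1 / 3) * (κ * (6 - κ)) * σsq)
    (∀ κ : ℝ,
      ∑ f, ((∫ w in (0:ℝ)..(q κ f + r κ f), (α - β * w)) - C f * q κ f) = W κ) ∧
    ∀ κ : ℝ, W κ ≤ W 3 := by
  intro Cbar σsq q r W
  have hn0 : (n : ℝ) ≠ 0 := by positivity
  have hβ0 : β ≠ 0 := ne_of_gt hβ
  have hint : ∀ x : ℝ, (∫ w in (0:ℝ)..x, (α - β * w)) = α * x - β * (x ^ 2 / 2) := by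
    intro x
    rw [intervalIntegral.integral_sub intervalIntegrable_const
        ((by fun_prop : Continuous fun w : ℝ => β * w).intervalIntegrable _ _),
      intervalIntegral.integral_const, intervalIntegral.integral_const_mul,
      integral_id]
    simp only [smul_eq_mul]
    ring
  have hsum0 : ∑ f, (C f - Cbar) = 0 := by
    simp only [Finset.sum_sub_distrib, Finset.sum_const, Finset.card_univ, Fintype.card_fin,
      nsmul_eq_mul, Cbar]
    field_simp
    ring
  have hsumsq : ∑ f, (C f - Cbar) ^ 2 = (n : ℝ) * σsq := by
    simp only [σsq]
    field_simp
  have hσ : 0 ≤ σsq := by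
    have : 0 ≤ ∑ g, (C g - Cbar) ^ 2 := Finset.sum_nonneg fun g _ => sq_nonneg _
    have : 0 ≤ (1 / (n : ℝ)) * ∑ g, (C g - Cbar) ^ 2 := by positivity
    exact this
  constructor
  · intro κ
    set a := α - Cbar with ha
    have key : ∀ f, (∫ w in (0:ℝ)..(q κ f + r κ f), (α - β * w)) - C f * q κ f
        = 3 * a ^ 2 / (8 * β)
          + ((α * (κ - 1)) / (2 * β) - a * (κ - 1) / (4 * β)
              + (Cbar * (1 + κ) - a) / (2 * β)) * (C f - Cbar)
          + ((3 + κ * (6 - κ)) / (8 * β)) * (C f - Cbar) ^ 2 := by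
      intro f
      rw [hint]
      simp only [q, r, ha]
      field_simp
      ring
    rw [Finset.sum_congr rfl fun f _ => key f]
    simp only [Finset.sum_add_distrib, ← Finset.mul_sum, hsum0, hsumsq, Finset.sum_const,
      Finset.card_univ, Fintype.card_fin, nsmul_eq_mul, mul_zero, add_zero, W]
    field_simp
    ring
  · intro κ
    simp only [W]
    apply mul_le_mul_of_nonneg_left _ (by positivity)
    nlinarith [mul_nonneg (sq_nonneg (κ - 3)) hσ]
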